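/- Suppose g(μ) = (1/2)‖Aμ − y‖² with A injective and h convex differentiable, so that F_β = g + β·h is strictly convex and the minimizer μ(β) over a closed convex set S is unique for every β ≥ 0. Then the map β ↦ μ(β) is continuous on [0, ∞). -/

import Mathlib

lemma stmt6_aux_lambda {m n : ℕ} (A : Matrix (Fin m) (Fin n) ℝ)
    (hA : Function.Injective A.mulVec) :
    ∃ lam > (0:ℝ), ∀ w : Fin n → ℝ,
      lam * ∑ j, (w j)^2 ≤ ∑ i, (A.mulVec w i)^2 := by
  rcases Nat.eq_zero_or_pos n with hn | hn
  · refine ⟨1, one_pos, fun w => ?_⟩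
    subst hn
    simp [Finset.univ_eq_empty]
  · set sq : (Fin n → ℝ) → ℝ := fun w => ∑ j, (w j)^2 with hsq
    set Q : (Fin n → ℝ) → ℝ := fun w => ∑ i, (A.mulVec w i)^2 with hQ
    have hsq_cont : Continuous sq := by fun_prop
    have hQ_cont : Continuous Q := by
      apply continuous_finset_sum
      intro i _
      have : Continuous fun w : Fin n → ℝ => A.mulVec w i := by
        simp only [Matrix.mulVec, dotProduct]
        fun_prop
      fun_prop
    set sph : Set (Fin n → ℝ) := {w | sq w = 1} with hsph
    have hclosed : IsClosed sph := isClosed_eq hsq_cont continuous_const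
    have hbdd : Bornology.IsBounded sph := by
      apply (Metric.isBounded_closedBall (x := (0 : Fin n → ℝ)) (r := 1)).subset
      intro w hw
      simp only [Metric.mem_closedBall, dist_zero_right]
      rw [pi_norm_le_iff_of_nonneg zero_le_one]
      intro j
      have h1 : (w j)^2 ≤ 1 := by
        have := Finset.single_le_sum (f := fun j => (w j)^2)
          (fun j _ => sq_nonneg _) (Finset.mem_univ j)
        simpa [hw.out] using this.trans_eq hw.out
      rw [Real.norm_eq_abs]
      exact (sq_le_one_iff_abs_le_one _).mp h1
    have hcpt : IsCompact sph := Metric.isCompact_of_isClosed_isBounded hclosed hbdd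
    have hne : sph.Nonempty := by
      refine ⟨Pi.single ⟨0, hn⟩ 1, ?_⟩
      simp only [hsph, Set.mem_setOf_eq, hsq]
      rw [Finset.sum_eq_single ⟨0, hn⟩]
      · simp
      · intro j _ hj
        simp [Pi.single_apply, hj]
      · simp
    obtain ⟨w0, hw0mem, hw0min⟩ := hcpt.exists_isMinOn hne hQ_cont.continuousOn
    set lam := Q w0 with hlam
    have hlam_pos : 0 < lam := by
      rcases lt_or_eq_of_le (show 0 ≤ lam from Finset.sum_nonneg fun i _ => sq_nonneg _) with hp | hp
      · exact hp
      · exfalso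
        have hzero : ∀ i, A.mulVec w0 i = 0 := by
          intro i
          have h2 := Finset.single_le_sum (f := fun i => (A.mulVec w0 i)^2)
            (fun i _ => sq_nonneg _) (Finset.mem_univ i)
          have h3 : Q w0 = 0 := hp.symm
          simp only [hQ] at h3
          rw [h3] at h2
          have h5 : (A.mulVec w0 i)^2 = 0 := le_antisymm h2 (sq_nonneg _)
          exact pow_eq_zero_iff two_ne_zero |>.mp h5
        have : A.mulVec w0 = A.mulVec 0 := by
          funext i; simp [hzero i, Matrix.mulVec_zero]
        have hw00 : w0 = 0 := hA this
        have h4 : sq w0 = 1 := hw0mem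
        rw [hw00] at h4
        simp [hsq] at h4
    refine ⟨lam, hlam_pos, fun w => ?_⟩
    rcases eq_or_ne w 0 with rfl | hw
    · simp [hsq]
    · have hsqw : 0 < sq w := by
        have hex : ∃ j, w j ≠ 0 := by
          by_contra hc
          push_neg at hc
          exact hw (funext hc)
        obtain ⟨j, hj⟩ := hex
        exact Finset.sum_pos' (fun j _ => sq_nonneg (w j)) ⟨j, Finset.mem_univ j, by positivity⟩
      set c := Real.sqrt (sq w) with hc
      have hcpos : 0 < c := Real.sqrt_pos.mpr hsqw
      have hc2 : c^2 = sq w := Real.sq_sqrt hsqw.le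
      set u := c⁻¹ • w with hu
      have husph : u ∈ sph := by
        simp only [hsph, Set.mem_setOf_eq, hsq, hu, Pi.smul_apply, smul_eq_mul]
        have : ∑ j, (c⁻¹ * w j)^2 = c⁻¹^2 * ∑ j, (w j)^2 := by
          rw [Finset.mul_sum]; congr 1; funext j; ring
        rw [this]
        field_simp
        rw [hc2]
      have hQu : lam ≤ Q u := hw0min husph
      have hQscale : Q w = c^2 * Q u := by
        simp only [hQ, hu]
        rw [Finset.mul_sum]
        congr 1; funext i
        rw [Matrix.mulVec_smul]
        simp only [Pi.smul_apply, smul_eq_mul]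
        field_simp
      show lam * sq w ≤ Q w
      rw [hQscale, hc2]
      calc lam * sq w = sq w * lam := by ring
        _ ≤ sq w * Q u := mul_le_mul_of_nonneg_left hQu hsqw.le

lemma stmt6_dist_sq_le {n : ℕ} (x z : Fin n → ℝ) :
    (dist x z)^2 ≤ ∑ j, (x j - z j)^2 := by
  have h1 : dist x z ≤ Real.sqrt (∑ j, (x j - z j)^2) := by
    rw [dist_eq_norm]
    rw [pi_norm_le_iff_of_nonneg (Real.sqrt_nonneg _)]
    intro j
    have h2 : (x j - z j)^2 ≤ ∑ j, (x j - z j)^2 :=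
      Finset.single_le_sum (f := fun j => (x j - z j)^2)
        (fun j _ => sq_nonneg _) (Finset.mem_univ j)
    calc ‖(x - z) j‖ = Real.sqrt ((x j - z j)^2) := by
          rw [Real.sqrt_sq_eq_abs]; simp [Real.norm_eq_abs]
      _ ≤ Real.sqrt (∑ j, (x j - z j)^2) := Real.sqrt_le_sqrt h2
  calc (dist x z)^2 ≤ (Real.sqrt (∑ j, (x j - z j)^2))^2 := by
        apply pow_le_pow_left₀ dist_nonneg h1
    _ = ∑ j, (x j - z j)^2 := Real.sq_sqrt (Finset.sum_nonneg fun j _ => sq_nonneg _)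

lemma stmt6_key {m n : ℕ} (A : Matrix (Fin m) (Fin n) ℝ) (y : Fin m → ℝ)
    (h : (Fin n → ℝ) → ℝ) (hconv : ConvexOn ℝ Set.univ h)
    (S : Set (Fin n → ℝ)) (hSconv : Convex ℝ S)
    (μ : ℝ → (Fin n → ℝ))
    (hmem : ∀ β ≥ (0:ℝ), μ β ∈ S)
    (hmin : ∀ β ≥ (0:ℝ), ∀ x ∈ S,
      (1/2) * ∑ i, (A.mulVec (μ β) i - y i)^2 + β * h (μ β) ≤
        (1/2) * ∑ i, (A.mulVec x i - y i)^2 + β * h x)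
    (β : ℝ) (hβ : 0 ≤ β) (x : Fin n → ℝ) (hx : x ∈ S) :
    (1/4) * ∑ i, (A.mulVec (x - μ β) i)^2 ≤
      ((1/2) * ∑ i, (A.mulVec x i - y i)^2 + β * h x) -
      ((1/2) * ∑ i, (A.mulVec (μ β) i - y i)^2 + β * h (μ β)) := by
  set z := (1/2:ℝ) • x + (1/2:ℝ) • μ β with hz
  have hzS : z ∈ S := hSconv hx (hmem β hβ) (by norm_num) (by norm_num) (by norm_num)
  have hmz := hmin β hβ z hzS
  have hhz : h z ≤ (1/2) * h x + (1/2) * h (μ β) := by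
    have := hconv.2 (Set.mem_univ x) (Set.mem_univ (μ β))
      (by norm_num : (0:ℝ) ≤ 1/2) (by norm_num : (0:ℝ) ≤ 1/2) (by norm_num : (1/2:ℝ) + 1/2 = 1)
    rw [hz, show (1/2:ℝ) = 2⁻¹ by norm_num]
    simpa [smul_eq_mul] using this
  have hAz : ∀ i, A.mulVec z i = (1/2) * A.mulVec x i + (1/2) * A.mulVec (μ β) i := by
    intro i
    simp [hz, Matrix.mulVec_add, Matrix.mulVec_smul, smul_eq_mul]
  have hgz : ∑ i, (A.mulVec z i - y i)^2
      = (1/2) * ∑ i, (A.mulVec x i - y i)^2 + (1/2) * ∑ i, (A.mulVec (μ β) i - y i)^2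
        - (1/4) * ∑ i, (A.mulVec (x - μ β) i)^2 := by
    rw [Finset.mul_sum, Finset.mul_sum, Finset.mul_sum, ← Finset.sum_add_distrib,
      ← Finset.sum_sub_distrib]
    apply Finset.sum_congr rfl
    intro i _
    rw [hAz i, Matrix.mulVec_sub]
    simp only [Pi.sub_apply]
    ring
  have hb : β * h z ≤ (1/2) * (β * h x) + (1/2) * (β * h (μ β)) := by
    calc β * h z ≤ β * ((1/2) * h x + (1/2) * h (μ β)) := mul_le_mul_of_nonneg_left hhz hβ
      _ = (1/2) * (β * h x) + (1/2) * (β * h (μ β)) := by ring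
  rw [hgz] at hmz
  linarith [hmz, hb]

set_option maxHeartbeats 1000000 in
/-- With g(μ) = (1/2)‖Aμ − y‖², A injective, and h convex continuous, the unique
minimizer μ(β) of g + β h over a nonempty closed convex set S depends continuously
on β on [0, ∞). -/
theorem stmt6 {m n : ℕ} (A : Matrix (Fin m) (Fin n) ℝ) (y : Fin m → ℝ)
    (hA : Function.Injective A.mulVec)
    (h : (Fin n → ℝ) → ℝ) (hconv : ConvexOn ℝ Set.univ h) (hcont : Continuous h)
    (S : Set (Fin n → ℝ)) (hSne : S.Nonempty) (hScl : IsClosed S) (hSconv : Convex ℝ S)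
    (μ : ℝ → (Fin n → ℝ))
    (hmem : ∀ β ≥ (0:ℝ), μ β ∈ S)
    (hmin : ∀ β ≥ (0:ℝ), ∀ x ∈ S,
      (1/2) * ∑ i, (A.mulVec (μ β) i - y i)^2 + β * h (μ β) ≤
        (1/2) * ∑ i, (A.mulVec x i - y i)^2 + β * h x)
    (huniq : ∀ β ≥ (0:ℝ), ∀ x ∈ S,
      ((1/2) * ∑ i, (A.mulVec x i - y i)^2 + β * h x =
        (1/2) * ∑ i, (A.mulVec (μ β) i - y i)^2 + β * h (μ β)) → x = μ β) :
    ContinuousOn μ (Set.Ici 0) := by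
  obtain ⟨lam, hlam, hQlow⟩ := stmt6_aux_lambda A hA
  have key2 : ∀ β ≥ (0:ℝ), ∀ β₀ ≥ (0:ℝ),
      (lam/2) * ∑ j, ((μ β - μ β₀) j)^2 ≤ (β - β₀) * (h (μ β₀) - h (μ β)) := by
    intro β hβ β₀ hβ₀
    have h1 := stmt6_key A y h hconv S hSconv μ hmem hmin β hβ (μ β₀) (hmem β₀ hβ₀)
    have h2 := stmt6_key A y h hconv S hSconv μ hmem hmin β₀ hβ₀ (μ β) (hmem β hβ)
    have hQs : ∑ i, (A.mulVec (μ β₀ - μ β) i)^2 = ∑ i, (A.mulVec (μ β - μ β₀) i)^2 := by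
      apply Finset.sum_congr rfl
      intro i _
      rw [show μ β₀ - μ β = -(μ β - μ β₀) from (neg_sub _ _).symm, Matrix.mulVec_neg]
      simp [neg_sq]
    rw [hQs] at h1
    have hlow := hQlow (μ β - μ β₀)
    have e : (β - β₀) * (h (μ β₀) - h (μ β)) =
        (β * h (μ β₀) - β * h (μ β)) + (β₀ * h (μ β) - β₀ * h (μ β₀)) := by ring
    linarith [h1, h2, hlow]
  rw [Metric.continuousOn_iff]
  intro β₀ hβ₀ ε hε
  have hβ₀0 : (0:ℝ) ≤ β₀ := hβ₀
  set ε' := min ε 1 with hε'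
  have hε'pos : 0 < ε' := lt_min hε one_pos
  have hε'le : ε' ≤ ε := min_le_left _ _
  obtain ⟨C, hC⟩ := (isCompact_closedBall (μ β₀) 1).exists_bound_of_continuousOn
    hcont.continuousOn
  set M := max C 1 with hM
  have hM1 : (1:ℝ) ≤ M := le_max_right _ _
  have hMpos : (0:ℝ) < M := lt_of_lt_of_le one_pos hM1
  have hMb : ∀ x ∈ Metric.closedBall (μ β₀) 1, |h x| ≤ M := fun x hx =>
    le_trans (le_of_eq (Real.norm_eq_abs _).symm) ((hC x hx).trans (le_max_left _ _))
  have hself : μ β₀ ∈ Metric.closedBall (μ β₀) 1 := Metric.mem_closedBall_self one_pos.le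
  set G₀ : ℝ := ∑ i, (A.mulVec (μ β₀) i - y i)^2 with hG₀
  have hG₀nn : 0 ≤ G₀ := Finset.sum_nonneg fun i _ => sq_nonneg _
  set K : ℝ := G₀ / β₀ with hK
  -- the case β ≥ β₀
  have main_ge : ∀ β : ℝ, β₀ ≤ β → β - β₀ < lam * ε'^2/(16*M) → β - β₀ < lam/(8*M) →
      dist (μ β) (μ β₀) < ε' := by
    intro β hββ₀ hd1 hd2
    have hm1 : (β - β₀) * (16*M) < lam * ε'^2 :=
      (lt_div_iff₀ (by positivity : (0:ℝ) < 16*M)).mp hd1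
    have hm2 : (β - β₀) * (8*M) < lam :=
      (lt_div_iff₀ (by positivity : (0:ℝ) < 8*M)).mp hd2
    have hβ0 : (0:ℝ) ≤ β := le_trans hβ₀0 hββ₀
    have hkey := key2 β hβ0 β₀ hβ₀0
    have hDsq : (dist (μ β) (μ β₀))^2 ≤ ∑ j, ((μ β - μ β₀) j)^2 := by
      have := stmt6_dist_sq_le (μ β) (μ β₀)
      simpa using this
    set D := dist (μ β) (μ β₀) with hD
    have hDnn : 0 ≤ D := dist_nonneg
    have hsqkey : (lam/2) * D^2 ≤ (β - β₀) * (h (μ β₀) - h (μ β)) := by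
      have := mul_le_mul_of_nonneg_left hDsq (by positivity : (0:ℝ) ≤ lam/2)
      linarith [hkey]
    have hD1 : D ≤ 1 := by
      by_contra hDgt
      push_neg at hDgt
      have hDpos : 0 < D := lt_trans one_pos hDgt
      set p := μ β₀ + D⁻¹ • (μ β - μ β₀) with hp
      have hpc : (1 - D⁻¹) • μ β₀ + D⁻¹ • μ β = p := by
        rw [hp]; module
      have hpball : p ∈ Metric.closedBall (μ β₀) 1 := by
        rw [Metric.mem_closedBall, hp]
        have e1 : dist (μ β₀ + D⁻¹ • (μ β - μ β₀)) (μ β₀) = ‖D⁻¹ • (μ β - μ β₀)‖ := by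
          rw [dist_eq_norm]; congr 1; abel
        rw [e1, norm_smul, Real.norm_eq_abs, abs_inv, abs_of_pos hDpos,
          show ‖μ β - μ β₀‖ = D from by rw [hD, dist_eq_norm],
          inv_mul_cancel₀ (ne_of_gt hDpos)]
      have ht0 : (0:ℝ) ≤ D⁻¹ := by positivity
      have htle : D⁻¹ ≤ 1 := by
        rw [inv_le_one_iff₀]; right; exact hDgt.le
      have ht1 : (0:ℝ) ≤ 1 - D⁻¹ := by linarith
      have hcv := hconv.2 (Set.mem_univ (μ β₀)) (Set.mem_univ (μ β)) ht1 ht0 (by ring)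
      rw [hpc] at hcv
      simp only [smul_eq_mul] at hcv
      have habs : h (μ β₀) - h p ≤ 2*M := by
        linarith [(abs_le.mp (hMb _ hself)).2, (abs_le.mp (hMb _ hpball)).1]
      have e2 : D⁻¹ * (h (μ β₀) - h (μ β)) ≤ h (μ β₀) - h p := by linarith [hcv]
      have e3 := mul_le_mul_of_nonneg_left e2 hDpos.le
      rw [← mul_assoc, mul_inv_cancel₀ (ne_of_gt hDpos), one_mul] at e3
      have e4 : h (μ β₀) - h (μ β) ≤ 2*M*D := by
        have := mul_le_mul_of_nonneg_left habs hDnn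
        linarith [e3, this]
      have h3 : (lam/2) * D^2 ≤ (β - β₀) * (2*M*D) :=
        le_trans hsqkey (mul_le_mul_of_nonneg_left e4 (by linarith))
      have h5 := mul_lt_mul_of_pos_right hm2 hDpos
      have h6 : lam * D < lam * D^2 := by
        nlinarith [mul_pos (mul_pos hlam hDpos) (sub_pos.mpr hDgt)]
      linarith [h3, h5, h6, mul_pos hlam hDpos]
    have hball : μ β ∈ Metric.closedBall (μ β₀) 1 := by
      rw [Metric.mem_closedBall]; exact hD1
    have e4 : h (μ β₀) - h (μ β) ≤ 2*M := by
      linarith [(abs_le.mp (hMb _ hself)).2, (abs_le.mp (hMb _ hball)).1]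
    have h4 : (lam/2) * D^2 ≤ (β - β₀) * (2*M) :=
      le_trans hsqkey (mul_le_mul_of_nonneg_left e4 (by linarith))
    have h5 : lam * D^2 < lam * (ε'^2/4) := by linarith [h4, hm1]
    have h6 : D^2 < ε'^2 := by
      have := (mul_lt_mul_iff_right₀ hlam).mp h5
      linarith [pow_pos hε'pos 2]
    exact lt_of_pow_lt_pow_left₀ 2 hε'pos.le h6
  -- the case β < β₀ (needs β₀ > 0)
  have main_lt : ∀ β : ℝ, 0 < β₀ → 0 ≤ β → β < β₀ → β₀ - β ≤ β₀/2 →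
      β₀ - β < lam * ε'^2/(4*(K+1)) → dist (μ β) (μ β₀) < ε' := by
    intro β hb0 hβ0 hββ₀ hhalf hd1
    have hKnn : 0 ≤ K := div_nonneg hG₀nn hβ₀0
    have hm1 : (β₀ - β) * (4*(K+1)) < lam * ε'^2 :=
      (lt_div_iff₀ (by positivity : (0:ℝ) < 4*(K+1))).mp hd1
    have hkey := key2 β hβ0 β₀ hβ₀0
    have h1 := stmt6_key A y h hconv S hSconv μ hmem hmin β hβ0 (μ β₀) (hmem β₀ hβ₀0)
    have hQnn : (0:ℝ) ≤ ∑ i, (A.mulVec (μ β₀ - μ β) i)^2 :=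
      Finset.sum_nonneg fun i _ => sq_nonneg _
    have hgβnn : (0:ℝ) ≤ ∑ i, (A.mulVec (μ β) i - y i)^2 :=
      Finset.sum_nonneg fun i _ => sq_nonneg _
    -- β * (h(μβ) - h(μβ₀)) ≤ G₀/2
    have hdiff : β * (h (μ β) - h (μ β₀)) ≤ G₀/2 := by
      have : (1/4) * ∑ i, (A.mulVec (μ β₀ - μ β) i)^2 ≤
          ((1/2) * G₀ + β * h (μ β₀)) -
          ((1/2) * ∑ i, (A.mulVec (μ β) i - y i)^2 + β * h (μ β)) := h1
      have e : β * (h (μ β) - h (μ β₀)) = β * h (μ β) - β * h (μ β₀) := by ring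
      linarith [this, hQnn, hgβnn]
    have hβhalf : β₀/2 ≤ β := by linarith
    have hup : h (μ β) - h (μ β₀) ≤ K := by
      rcases le_or_gt (h (μ β) - h (μ β₀)) 0 with hc | hc
      · linarith
      · rw [hK, le_div_iff₀ hb0]
        have e5 := mul_le_mul_of_nonneg_left (show β₀ ≤ 2*β by linarith) hc.le
        linarith [e5, hdiff]
    have hDsq : (dist (μ β) (μ β₀))^2 ≤ ∑ j, ((μ β - μ β₀) j)^2 := by
      have := stmt6_dist_sq_le (μ β) (μ β₀)
      simpa using this
    set D := dist (μ β) (μ β₀) with hD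
    have hsqkey : (lam/2) * D^2 ≤ (β₀ - β) * (h (μ β) - h (μ β₀)) := by
      have e6 := mul_le_mul_of_nonneg_left hDsq (by positivity : (0:ℝ) ≤ lam/2)
      have e7 : (β - β₀) * (h (μ β₀) - h (μ β)) = (β₀ - β) * (h (μ β) - h (μ β₀)) := by ring
      linarith [hkey, e6]
    have h4 : (lam/2) * D^2 ≤ (β₀ - β) * (K+1) :=
      le_trans hsqkey (mul_le_mul_of_nonneg_left (by linarith) (by linarith))
    have h5 : lam * D^2 < lam * (ε'^2/2) := by linarith [h4, hm1]
    have h6 : D^2 < ε'^2 := by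
      have := (mul_lt_mul_iff_right₀ hlam).mp h5
      linarith [pow_pos hε'pos 2]
    exact lt_of_pow_lt_pow_left₀ 2 hε'pos.le h6
  rcases eq_or_lt_of_le hβ₀0 with hb0 | hb0
  · -- β₀ = 0
    refine ⟨min (lam * ε'^2/(16*M)) (lam/(8*M)), by positivity, fun β hβ hdist => ?_⟩
    have hβ0 : (0:ℝ) ≤ β := hβ
    have hββ₀ : β₀ ≤ β := by rw [← hb0]; exact hβ0
    rw [Real.dist_eq, abs_of_nonneg (by linarith)] at hdist
    exact lt_of_lt_of_le (main_ge β hββ₀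
      (lt_of_lt_of_le hdist (min_le_left _ _))
      (lt_of_lt_of_le hdist (min_le_right _ _))) hε'le
  · -- β₀ > 0
    have hKnn : 0 ≤ K := div_nonneg hG₀nn hβ₀0
    refine ⟨min (min (lam * ε'^2/(16*M)) (lam/(8*M)))
      (min (β₀/2) (lam * ε'^2/(4*(K+1)))), by positivity, fun β hβ hdist => ?_⟩
    have hβ0 : (0:ℝ) ≤ β := hβ
    rw [Real.dist_eq] at hdist
    rcases le_or_gt β₀ β with hc | hc
    · rw [abs_of_nonneg (by linarith)] at hdist
      exact lt_of_lt_of_le (main_ge β hc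
        (lt_of_lt_of_le hdist ((min_le_left _ _).trans (min_le_left _ _)))
        (lt_of_lt_of_le hdist ((min_le_left _ _).trans (min_le_right _ _)))) hε'le
    · rw [abs_of_neg (by linarith), neg_sub] at hdist
      exact lt_of_lt_of_le (main_lt β hb0 hβ0 hc
        ((lt_of_lt_of_le hdist ((min_le_right _ _).trans (min_le_left _ _))).le)
        (lt_of_lt_of_le hdist ((min_le_right _ _).trans (min_le_right _ _)))) hε'le
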